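/- Let A and C be 3×3 non-negative integer matrices and let M = [[A, A−I],[C−I, C]] be the 6×6 block matrix, where A−I and C−I are assumed non-negative and every row of A−I and of C−I has at least one strictly positive entry, and suppose A + C − I has all entries strictly positive. Then M² has all entries strictly positive, i.e., M is a primitive matrix. -/
import Mathlib

lemma key_pos (B P R : Matrix (Fin 3) (Fin 3) ℤ)
    (hB : ∀ i j, 0 ≤ B i j) (hP : ∀ i j, 0 < P i j) (hR : ∀ i j, 0 ≤ R i j)
    (i j : Fin 3) (hrow : ∃ k, 0 < B i k) :
    0 < (B * P + R) i j := by
  obtain ⟨k, hk⟩ := hrow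
  have hsum : 0 < (B * P) i j := by
    rw [Matrix.mul_apply]
    apply Finset.sum_pos' (fun l _ => mul_nonneg (hB i l) (hP l j).le)
    exact ⟨k, Finset.mem_univ k, mul_pos hk (hP k j)⟩
  have := hR i j
  simp only [Matrix.add_apply]
  linarith

/-- If `A, C` are 3×3 non-negative integer matrices with `A - I` and `C - I`
non-negative, every row of `A - I` and of `C - I` containing a strictly positive entry,
and `A + C - I` has all entries strictly positive, then the square of the block matrix
`M = [[A, A-I], [C-I, C]]` has all entries strictly positive, i.e. `M` is primitive. -/
theorem stmt12 (A C : Matrix (Fin 3) (Fin 3) ℤ)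
    (hA : ∀ i j, 0 ≤ A i j) (hC : ∀ i j, 0 ≤ C i j)
    (hA1 : ∀ i j, 0 ≤ (A - 1) i j) (hC1 : ∀ i j, 0 ≤ (C - 1) i j)
    (hArow : ∀ i, ∃ j, 0 < (A - 1) i j) (hCrow : ∀ i, ∃ j, 0 < (C - 1) i j)
    (hACpos : ∀ i j, 0 < (A + C - 1) i j) :
    ∀ i j, 0 < (Matrix.fromBlocks A (A - 1) (C - 1) C *
                Matrix.fromBlocks A (A - 1) (C - 1) C) i j := by
  rw [Matrix.fromBlocks_multiply]
  have e11 : A * A + (A - 1) * (C - 1) = (A - 1) * (A + C - 1) + A := by noncomm_ring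
  have e12 : A * (A - 1) + (A - 1) * C = (A - 1) * (A + C - 1) + (A - 1) := by noncomm_ring
  have e21 : (C - 1) * A + C * (C - 1) = (C - 1) * (A + C - 1) + (C - 1) := by noncomm_ring
  have e22 : (C - 1) * (A - 1) + C * C = (C - 1) * (A + C - 1) + C := by noncomm_ring
  rintro (i | i) (j | j)
  · rw [Matrix.fromBlocks_apply₁₁, e11]
    exact key_pos _ _ _ hA1 hACpos hA i j (hArow i)
  · rw [Matrix.fromBlocks_apply₁₂, e12]
    exact key_pos _ _ _ hA1 hACpos hA1 i j (hArow i)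
  · rw [Matrix.fromBlocks_apply₂₁, e21]
    exact key_pos _ _ _ hC1 hACpos hC1 i j (hCrow i)
  · rw [Matrix.fromBlocks_apply₂₂, e22]
    exact key_pos _ _ _ hC1 hACpos hC i j (hCrow i)
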